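/- Let r ≥ 2, t ≥ 1, and let 𝓕 be a shifted family of k-element subsets of [n]. Then 𝓕 is r-wise t-intersecting if and only if for every choice of (not necessarily distinct) F₁,…,F_r ∈ 𝓕 there exists an integer s with 1 ≤ s ≤ n such that |F₁ ∩ [s]| + |F₂ ∩ [s]| + ⋯ + |F_r ∩ [s]| ≥ (r−1)·s + t. -/

import Mathlib

open Finset

private lemma sum_inter_le {r s : ℕ} (A : Fin r → Finset ℕ)
    (hA : ∀ i, A i ⊆ Finset.Icc 1 s) (J : Finset (Fin r)) :
    ∑ i ∈ J, (A i).card + s ≤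
      J.card * s + ((Finset.Icc 1 s).filter (fun x => ∀ i ∈ J, x ∈ A i)).card := by
  classical
  induction J using Finset.induction_on with
  | empty => simp [Nat.card_Icc]
  | insert _ _ haJ =>
    rename_i a J IH
    have hD : (Finset.Icc 1 s).filter (fun x => ∀ i ∈ insert a J, x ∈ A i)
        = ((Finset.Icc 1 s).filter (fun x => ∀ i ∈ J, x ∈ A i)) ∩ A a := by
      ext x
      simp only [Finset.mem_filter, Finset.mem_inter, Finset.mem_insert]
      constructor
      · intro ⟨h1, h2⟩
        exact ⟨⟨h1, fun i hi => h2 i (Or.inr hi)⟩, h2 a (Or.inl rfl)⟩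
      · rintro ⟨⟨h1, h2⟩, h3⟩
        exact ⟨h1, fun i hi => by rcases hi with rfl | hi; exact h3; exact h2 i hi⟩
    set D := (Finset.Icc 1 s).filter (fun x => ∀ i ∈ J, x ∈ A i) with hDdef
    have hkey : (A a).card + D.card ≤ s + (D ∩ A a).card := by
      have h1 := Finset.card_union_add_card_inter D (A a)
      have h2 : (D ∪ A a).card ≤ s := by
        have : D ∪ A a ⊆ Finset.Icc 1 s :=
          Finset.union_subset (Finset.filter_subset _ _) (hA a)
        calc (D ∪ A a).card ≤ (Finset.Icc 1 s).card := Finset.card_le_card this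
        _ = s := by rw [Nat.card_Icc]; omega
      omega
    rw [Finset.sum_insert haJ, Finset.card_insert_of_notMem haJ, hD]
    have hmul : (J.card + 1) * s = J.card * s + s := by ring
    omega


/-- A family `𝓕` is `r`-wise `t`-intersecting if any `r` (not necessarily distinct)
members have at least `t` common elements. -/
def RwiseIntersecting (r t : ℕ) (𝓕 : Finset (Finset ℕ)) : Prop :=
  ∀ G : Fin r → Finset ℕ, (∀ i, G i ∈ 𝓕) → t ≤ (⋂ i, ((G i : Finset ℕ) : Set ℕ)).ncard

/-- A family of subsets of `[n]` is shifted if for every `F` in the family and all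
`1 ≤ i < j ≤ n` with `j ∈ F`, `i ∉ F`, the set `(F \ {j}) ∪ {i}` is also in the family. -/
def Shifted (n : ℕ) (𝓕 : Finset (Finset ℕ)) : Prop :=
  ∀ F ∈ 𝓕, ∀ i j : ℕ, 1 ≤ i → i < j → j ≤ n → j ∈ F → i ∉ F →
    insert i (F.erase j) ∈ 𝓕

private lemma update_sum {r : ℕ} (G : Fin r → Finset ℕ) (i : Fin r) (N : Finset ℕ)
    (φ : Finset ℕ → ℕ) :
    ∑ j, φ (Function.update G i N j) + φ (G i) = ∑ j, φ (G j) + φ N := by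
  have h : (fun j => φ (Function.update G i N j)) = Function.update (fun j => φ (G j)) i (φ N) := by
    funext j
    by_cases h : j = i <;> simp [Function.update_apply, h]
  have h2 := Finset.sum_update_of_mem (Finset.mem_univ i) (fun j => φ (G j)) (φ N)
  have h3 : ∑ j ∈ (Finset.univ : Finset (Fin r)).erase i, φ (G j) + φ (G i)
      = ∑ j, φ (G j) := Finset.sum_erase_add _ _ (Finset.mem_univ i)
  have h4 : (Finset.univ : Finset (Fin r)) \ {i} = Finset.univ.erase i := by
    simp [Finset.erase_eq]
  rw [show (∑ j, φ (Function.update G i N j)) = ∑ j, Function.update (fun j => φ (G j)) i (φ N) j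
      from by rw [← h], h2, h4]
  omega

private lemma ncard_iInter_eq {r : ℕ} (hr : 0 < r) (G : Fin r → Finset ℕ) :
    (⋂ i, ((G i : Finset ℕ) : Set ℕ)).ncard
      = ((G ⟨0, hr⟩).filter (fun a => ∀ j, a ∈ G j)).card := by
  rw [← Set.ncard_coe_finset]
  congr 1
  ext a
  simp only [Set.mem_iInter, Finset.coe_filter, Set.mem_setOf_eq, Finset.mem_coe,
    Finset.mem_filter]
  constructor
  · intro h; exact ⟨h _, h⟩
  · intro h; exact h.2

private lemma descent (n k r t : ℕ) (hr : 2 ≤ r) (ht : 1 ≤ t)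
    (𝓕 : Finset (Finset ℕ))
    (h𝓕 : 𝓕 ⊆ Finset.powersetCard k (Finset.Icc 1 n))
    (hsh : Shifted n 𝓕) (hint : RwiseIntersecting r t 𝓕) :
    ∀ W : ℕ, ∀ G : Fin r → Finset ℕ, (∑ i, ∑ a ∈ G i, a) ≤ W →
      (∀ i, G i ∈ 𝓕) →
      (∀ s, 1 ≤ s → s ≤ n → ∑ i, ((G i) ∩ Finset.Icc 1 s).card < (r - 1) * s + t) → False := by
  intro W
  induction W using Nat.strong_induction_on with
  | _ W IH =>
  intro G hW hG hviol
  have hrpos : 0 < r := by omega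
  have hGsub : ∀ i, G i ⊆ Finset.Icc 1 n := fun i =>
    (Finset.mem_powersetCard.mp (h𝓕 (hG i))).1
  set i0 : Fin r := ⟨0, hrpos⟩ with hi0
  set I : Finset ℕ := (G i0).filter (fun a => ∀ j, a ∈ G j) with hIdef
  have hIcard : t ≤ I.card := by
    have := hint G hG
    rwa [ncard_iInter_eq hrpos G] at this
  have hIne : I.Nonempty := Finset.card_pos.mp (by omega)
  set x : ℕ := I.max' hIne with hxdef
  have hxI : x ∈ I := I.max'_mem hIne
  have hxall : ∀ j, x ∈ G j := (Finset.mem_filter.mp hxI).2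
  have hx1 : 1 ≤ x := (Finset.mem_Icc.mp (hGsub i0 (hxall i0))).1
  have hxn : x ≤ n := (Finset.mem_Icc.mp (hGsub i0 (hxall i0))).2
  -- t ≤ x
  have hIsub : I ⊆ Finset.Icc 1 x := by
    intro a ha
    have h1 : 1 ≤ a := (Finset.mem_Icc.mp (hGsub i0 ((Finset.mem_filter.mp ha).1))).1
    exact Finset.mem_Icc.mpr ⟨h1, I.le_max' a ha⟩
  have htx : t ≤ x := by
    have := Finset.card_le_card hIsub
    rw [Nat.card_Icc] at this
    omega
  -- violation at x
  have hvx := hviol x hx1 hxn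
  -- find a hole
  have hhole : ∃ j : Fin r, ∃ y, y ∈ Finset.Icc 1 x ∧ y ∉ G j := by
    by_contra hcon
    push_neg at hcon
    have hall : ∀ j : Fin r, ((G j) ∩ Finset.Icc 1 x).card = x := by
      intro j
      have hsub : Finset.Icc 1 x ⊆ G j ∩ Finset.Icc 1 x := fun y hy =>
        Finset.mem_inter.mpr ⟨hcon j y hy, hy⟩
      have h1 := Finset.card_le_card hsub
      have h2 := Finset.card_le_card (Finset.inter_subset_right (s₁ := G j) (s₂ := Finset.Icc 1 x))
      rw [Nat.card_Icc] at h1 h2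
      omega
    have hsum : ∑ j, ((G j) ∩ Finset.Icc 1 x).card = r * x := by
      rw [Finset.sum_congr rfl (fun j _ => hall j)]
      simp [Finset.card_univ, mul_comm]
    rw [hsum] at hvx
    have : (r - 1) * x + t ≤ (r - 1) * x + x := by omega
    have h5 : (r - 1) * x + x = r * x := by
      have h6 := Nat.sub_one_mul r x
      have h7 : x ≤ r * x := Nat.le_mul_of_pos_left x hrpos
      omega
    omega
  obtain ⟨j0, y0, hy0Icc, hy0⟩ := hhole
  have hy0x : y0 ≠ x := fun h => hy0 (h ▸ hxall j0)
  set H : Finset ℕ := (Finset.Icc 1 (x - 1)).filter (fun y => ∃ j, y ∉ G j) with hHdef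
  have hHne : H.Nonempty := by
    refine ⟨y0, Finset.mem_filter.mpr ⟨?_, ⟨j0, hy0⟩⟩⟩
    rw [Finset.mem_Icc] at hy0Icc ⊢
    omega
  set y : ℕ := H.max' hHne with hydef
  have hyH : y ∈ H := H.max'_mem hHne
  have hyIcc : y ∈ Finset.Icc 1 (x - 1) := (Finset.mem_filter.mp hyH).1
  have hy1 : 1 ≤ y := (Finset.mem_Icc.mp hyIcc).1
  have hyx : y < x := by
    have := (Finset.mem_Icc.mp hyIcc).2; omega
  obtain ⟨i, hyi⟩ := (Finset.mem_filter.mp hyH).2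
  have hmax : ∀ z, y < z → z < x → ∀ j, z ∈ G j := by
    intro z hz1 hz2 j
    by_contra hzj
    have : z ∈ H := Finset.mem_filter.mpr ⟨Finset.mem_Icc.mpr ⟨by omega, by omega⟩, ⟨j, hzj⟩⟩
    have := H.le_max' z this
    omega
  set N : Finset ℕ := insert y ((G i).erase x) with hNdef
  have hN𝓕 : N ∈ 𝓕 := hsh (G i) (hG i) y x hy1 hyx hxn (hxall i) hyi
  set G' : Fin r → Finset ℕ := Function.update G i N with hG'def
  have hG' : ∀ j, G' j ∈ 𝓕 := by
    intro j
    by_cases h : j = i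
    · rw [hG'def, h, Function.update_self]; exact hN𝓕
    · rw [hG'def, Function.update_of_ne h]; exact hG j
  have hynotin : y ∉ (G i).erase x := fun h => hyi (Finset.mem_of_mem_erase h)
  -- weight decreases
  have hwN : (∑ a ∈ N, a) + x = (∑ a ∈ G i, a) + y := by
    rw [hNdef, Finset.sum_insert hynotin]
    have := Finset.sum_erase_add (G i) id (hxall i)
    simp only [id] at this
    omega
  have hwsum := update_sum G i N (fun F => ∑ a ∈ F, a)
  have hWlt : (∑ j, ∑ a ∈ G' j, a) < ∑ j, ∑ a ∈ G j, a := by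
    simp only [hG'def] at *
    omega
  -- key estimate
  have hkey : ∀ s, y ≤ s → s < x →
      ∑ j, ((G j) ∩ Finset.Icc 1 s).card + 1 < (r - 1) * s + t := by
    intro s hys hsx
    have hper : ∀ j : Fin r, ((G j) ∩ Finset.Icc 1 s).card + (x - s)
        ≤ ((G j) ∩ Finset.Icc 1 x).card := by
      intro j
      have hIccsub : Finset.Icc (s + 1) x ⊆ G j := by
        intro z hz
        rw [Finset.mem_Icc] at hz
        rcases eq_or_lt_of_le hz.2 with rfl | hlt
        · exact hxall j
        · exact hmax z (by omega) hlt j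
      have hdisj : Disjoint ((G j) ∩ Finset.Icc 1 s) (Finset.Icc (s + 1) x) := by
        rw [Finset.disjoint_left]
        intro a ha ha2
        rw [Finset.mem_inter, Finset.mem_Icc] at ha
        rw [Finset.mem_Icc] at ha2
        omega
      have hsub : ((G j) ∩ Finset.Icc 1 s) ∪ Finset.Icc (s + 1) x ⊆ (G j) ∩ Finset.Icc 1 x := by
        intro a ha
        rw [Finset.mem_union] at ha
        rcases ha with ha | ha
        · rw [Finset.mem_inter, Finset.mem_Icc] at ha ⊢
          exact ⟨ha.1, ha.2.1, by omega⟩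
        · have := hIccsub ha
          rw [Finset.mem_Icc] at ha
          rw [Finset.mem_inter, Finset.mem_Icc]
          exact ⟨this, by omega, ha.2⟩
      have := Finset.card_le_card hsub
      rw [Finset.card_union_of_disjoint hdisj, Nat.card_Icc] at this
      omega
    have hsumle : ∑ j, ((G j) ∩ Finset.Icc 1 s).card + r * (x - s)
        ≤ ∑ j, ((G j) ∩ Finset.Icc 1 x).card := by
      calc ∑ j, ((G j) ∩ Finset.Icc 1 s).card + r * (x - s)
          = ∑ j : Fin r, (((G j) ∩ Finset.Icc 1 s).card + (x - s)) := by
            rw [Finset.sum_add_distrib, Finset.sum_const, Finset.card_univ]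
            simp [mul_comm, Fintype.card_fin]
        _ ≤ ∑ j, ((G j) ∩ Finset.Icc 1 x).card := Finset.sum_le_sum (fun j _ => hper j)
    set A := ∑ j, ((G j) ∩ Finset.Icc 1 s).card
    set B := ∑ j, ((G j) ∩ Finset.Icc 1 x).card
    set d := x - s with hd
    set u := r - 1 with hu
    have hxd : x = s + d := by omega
    have hru : r = u + 1 := by omega
    have h1 : A + r * d ≤ B := hsumle
    have h2 : B + 1 ≤ u * x + t := hvx
    have h3 : u * x = u * s + u * d := by rw [hxd]; ring
    have h4 : r * d = u * d + d := by rw [hru]; ring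
    have hd1 : 1 ≤ d := by omega
    omega
  -- violation for G'
  have hviol' : ∀ s, 1 ≤ s → s ≤ n →
      ∑ j, ((G' j) ∩ Finset.Icc 1 s).card < (r - 1) * s + t := by
    intro s hs1 hsn
    have hupd := update_sum G i N (fun F => (F ∩ Finset.Icc 1 s).card)
    simp only [← hG'def] at hupd
    rcases lt_or_ge s y with hsy | hys
    · -- s < y : N ∩ [s] = G i ∩ [s]
      have hNcap : N ∩ Finset.Icc 1 s = (G i) ∩ Finset.Icc 1 s := by
        ext a
        simp only [hNdef, Finset.mem_inter, Finset.mem_insert, Finset.mem_erase, Finset.mem_Icc]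
        constructor
        · rintro ⟨rfl | ⟨_, ha⟩, h2⟩
          · omega
          · exact ⟨ha, h2⟩
        · rintro ⟨ha, h2⟩
          exact ⟨Or.inr ⟨by omega, ha⟩, h2⟩
      rw [hNcap] at hupd
      have := hviol s hs1 hsn
      omega
    rcases lt_or_ge s x with hsx | hxs
    · -- y ≤ s < x : card N∩[s] = card (G i)∩[s] + 1
      have hNcap : N ∩ Finset.Icc 1 s = insert y ((G i) ∩ Finset.Icc 1 s) := by
        ext a
        simp only [hNdef, Finset.mem_inter, Finset.mem_insert, Finset.mem_erase, Finset.mem_Icc]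
        constructor
        · rintro ⟨rfl | ⟨_, ha⟩, h2⟩
          · exact Or.inl rfl
          · exact Or.inr ⟨ha, h2⟩
        · rintro (rfl | ⟨ha, h2⟩)
          · exact ⟨Or.inl rfl, by omega⟩
          · exact ⟨Or.inr ⟨by omega, ha⟩, h2⟩
      have hynot2 : y ∉ (G i) ∩ Finset.Icc 1 s := fun h => hyi (Finset.mem_inter.mp h).1
      rw [hNcap, Finset.card_insert_of_notMem hynot2] at hupd
      have := hkey s hys hsx
      omega
    · -- x ≤ s
      have hxin : x ∈ (G i) ∩ Finset.Icc 1 s :=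
        Finset.mem_inter.mpr ⟨hxall i, Finset.mem_Icc.mpr ⟨hx1, hxs⟩⟩
      have hNcap : N ∩ Finset.Icc 1 s = insert y (((G i) ∩ Finset.Icc 1 s).erase x) := by
        ext a
        simp only [hNdef, Finset.mem_inter, Finset.mem_insert, Finset.mem_erase, Finset.mem_Icc]
        constructor
        · rintro ⟨rfl | ⟨hax, ha⟩, h2⟩
          · exact Or.inl rfl
          · exact Or.inr ⟨hax, ha, h2⟩
        · rintro (rfl | ⟨hax, ha, h2⟩)
          · exact ⟨Or.inl rfl, by omega⟩
          · exact ⟨Or.inr ⟨hax, ha⟩, h2⟩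
      have hynot2 : y ∉ ((G i) ∩ Finset.Icc 1 s).erase x :=
        fun h => hyi (Finset.mem_inter.mp (Finset.mem_of_mem_erase h)).1
      have hcard1 : (((G i) ∩ Finset.Icc 1 s).erase x).card
          = ((G i) ∩ Finset.Icc 1 s).card - 1 := Finset.card_erase_of_mem hxin
      have hpos : 1 ≤ ((G i) ∩ Finset.Icc 1 s).card := Finset.card_pos.mpr ⟨x, hxin⟩
      rw [hNcap, Finset.card_insert_of_notMem hynot2, hcard1] at hupd
      have := hviol s hs1 hsn
      omega
  exact IH (∑ j, ∑ a ∈ G' j, a) (by omega) G' le_rfl hG' hviol'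

theorem shifted_rwise_intersecting_iff
    (n k r t : ℕ) (hr : 2 ≤ r) (ht : 1 ≤ t)
    (𝓕 : Finset (Finset ℕ))
    (h𝓕 : 𝓕 ⊆ Finset.powersetCard k (Finset.Icc 1 n))
    (hsh : Shifted n 𝓕) :
    RwiseIntersecting r t 𝓕 ↔
      ∀ G : Fin r → Finset ℕ, (∀ i, G i ∈ 𝓕) →
        ∃ s : ℕ, 1 ≤ s ∧ s ≤ n ∧
          (r - 1) * s + t ≤ ∑ i : Fin r, ((G i) ∩ Finset.Icc 1 s).card := by
  have hrpos : 0 < r := by omega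
  constructor
  · intro hint G hG
    by_contra hcon
    push_neg at hcon
    exact descent n k r t hr ht 𝓕 h𝓕 hsh hint (∑ i, ∑ a ∈ G i, a) G le_rfl hG
      (fun s hs1 hsn => hcon s hs1 hsn)
  · intro hcond G hG
    obtain ⟨s, hs1, hsn, hsum⟩ := hcond G hG
    set A : Fin r → Finset ℕ := fun i => (G i) ∩ Finset.Icc 1 s with hAdef
    have hA : ∀ i, A i ⊆ Finset.Icc 1 s := fun i => Finset.inter_subset_right
    have hkey := sum_inter_le A hA (Finset.univ : Finset (Fin r))
    simp only [Finset.card_univ, Fintype.card_fin] at hkey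
    have hrs : (r - 1) * s + s = r * s := by
      have h6 := Nat.sub_one_mul r s
      have h7 : s ≤ r * s := Nat.le_mul_of_pos_left s hrpos
      omega
    set D := (Finset.Icc 1 s).filter (fun x => ∀ i ∈ (Finset.univ : Finset (Fin r)), x ∈ A i)
      with hDdef
    have hAe : ∑ i, (A i).card = ∑ i, ((G i) ∩ Finset.Icc 1 s).card := rfl
    have htD : t ≤ D.card := by omega
    have hDsub : (D : Set ℕ) ⊆ ⋂ i, ((G i : Finset ℕ) : Set ℕ) := by
      intro a ha
      rw [Finset.mem_coe, hDdef, Finset.mem_filter] at ha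
      rw [Set.mem_iInter]
      intro i
      exact Finset.mem_inter.mp (ha.2 i (Finset.mem_univ i)) |>.1
    have hfin : (⋂ i, ((G i : Finset ℕ) : Set ℕ)).Finite :=
      Set.Finite.subset (G ⟨0, hrpos⟩).finite_toSet
        (Set.iInter_subset (fun i => ((G i : Finset ℕ) : Set ℕ)) ⟨0, hrpos⟩)
    calc t ≤ D.card := htD
      _ = ((D : Set ℕ)).ncard := (Set.ncard_coe_finset D).symm
      _ ≤ (⋂ i, ((G i : Finset ℕ) : Set ℕ)).ncard := Set.ncard_le_ncard hDsub hfin
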